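/- Let R be a ring and let s, t be central units of R. Then R is δ-reversible if and only if the ring H_{(s,t)}(R) is δ-reversible, where H_{(s,t)}(R) is the subring of M₃(R) consisting of all matrices [[a,0,0],[c,d,e],[0,0,f]] with a, c, d, e, f ∈ R satisfying a − d = sc and d − f = te. -/

import Mathlib

/-- A right ideal `I` of `R` (a submodule of `R` as a right `R`-module, i.e. an
`Rᵐᵒᵖ`-submodule) is essential if every right ideal meeting it trivially is trivial. -/
def IsEssentialRightIdeal (R : Type*) [Ring R] (I : Submodule Rᵐᵒᵖ R) : Prop :=
  ∀ K : Submodule Rᵐᵒᵖ R, K ⊓ I = ⊥ → K = ⊥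

/-- The Zhou radical `δ(R)`: the intersection of all essential maximal right ideals of `R`
(the whole ring if there are no essential maximal right ideals). -/
def zhouRadical (R : Type*) [Ring R] : Set R :=
  ⋂₀ { S : Set R | ∃ I : Submodule Rᵐᵒᵖ R, IsCoatom I ∧ IsEssentialRightIdeal R I ∧ S = ↑I }

/-- A ring `R` is `δ`-reversible if `a * b = 0` implies `b * a ∈ δ(R)`. -/
def IsDeltaReversible (R : Type*) [Ring R] : Prop :=
  ∀ a b : R, a * b = 0 → b * a ∈ zhouRadical R

open MulOpposite

lemma mem_zhouRadical_iff {R : Type*} [Ring R] (x : R) :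
    x ∈ zhouRadical R ↔ ∀ I : Submodule Rᵐᵒᵖ R, IsCoatom I → IsEssentialRightIdeal R I → x ∈ I := by
  constructor
  · intro h I hc he
    exact h ↑I ⟨I, hc, he, rfl⟩
  · rintro h S ⟨I, hc, he, rfl⟩
    exact h I hc he

section Transfer
variable {A B : Type*} [Ring A] [Ring B]

/-- Pullback of a right ideal along a ring isomorphism. -/
def ridealComap (e : A ≃+* B) (I : Submodule Bᵐᵒᵖ B) : Submodule Aᵐᵒᵖ A where
  carrier := e ⁻¹' I
  zero_mem' := by simp
  add_mem' := fun {x y} hx hy => by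
    simp only [Set.mem_preimage, SetLike.mem_coe, map_add] at *
    exact I.add_mem hx hy
  smul_mem' := fun c x hx => by
    simp only [Set.mem_preimage, SetLike.mem_coe, smul_eq_mul_unop, map_mul] at *
    have := I.smul_mem (op (e (unop c))) hx
    rwa [smul_eq_mul_unop, unop_op] at this

@[simp] lemma mem_ridealComap (e : A ≃+* B) (I : Submodule Bᵐᵒᵖ B) (x : A) :
    x ∈ ridealComap e I ↔ e x ∈ I := Iff.rfl

/-- Right ideal lattices of isomorphic rings are order-isomorphic. -/
def ridealEquiv (e : A ≃+* B) : Submodule Aᵐᵒᵖ A ≃o Submodule Bᵐᵒᵖ B where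
  toFun I := ridealComap e.symm I
  invFun J := ridealComap e J
  left_inv I := by ext x; simp
  right_inv J := by ext x; simp
  map_rel_iff' := by
    intro I I'
    constructor
    · intro h x hx
      have : e.symm (e x) ∈ I := by simpa using hx
      simpa using h this
    · intro h x hx
      exact h hx

lemma ess_congr {α β : Type*} [Lattice α] [BoundedOrder α] [Lattice β] [BoundedOrder β]
    (f : α ≃o β) (i : α) :
    (∀ k, k ⊓ i = ⊥ → k = ⊥) ↔ (∀ k, k ⊓ f i = ⊥ → k = ⊥) := by
  constructor
  · intro h k hk
    have : f.symm k ⊓ i = ⊥ := by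
      have := congrArg f.symm hk
      simpa using this
    have := h _ this
    have := congrArg f this
    simpa using this
  · intro h k hk
    have : f k ⊓ f i = ⊥ := by rw [← OrderIso.map_inf, hk, OrderIso.map_bot]
    have := h _ this
    have := congrArg f.symm this
    simpa using this

lemma isEss_congr (e : A ≃+* B) (I : Submodule Aᵐᵒᵖ A) :
    IsEssentialRightIdeal A I ↔ IsEssentialRightIdeal B (ridealEquiv e I) :=
  ess_congr (ridealEquiv e) I

lemma zhou_congr (e : A ≃+* B) (x : A) : x ∈ zhouRadical A ↔ e x ∈ zhouRadical B := by
  rw [mem_zhouRadical_iff, mem_zhouRadical_iff]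
  constructor
  · intro h J hc he
    have hc' : IsCoatom ((ridealEquiv e).symm J) :=
      ((ridealEquiv e).symm.isCoatom_iff J).mpr hc
    have he' : IsEssentialRightIdeal A ((ridealEquiv e).symm J) := by
      rw [isEss_congr e]
      simpa using he
    have := h _ hc' he'
    simpa [ridealEquiv, ridealComap] using this
  · intro h I hc he
    have hc' : IsCoatom (ridealEquiv e I) := ((ridealEquiv e).isCoatom_iff I).mpr hc
    have he' : IsEssentialRightIdeal B (ridealEquiv e I) := (isEss_congr e I).mp he
    have := h _ hc' he'
    simpa [ridealEquiv, ridealComap] using this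

lemma deltaRev_congr (e : A ≃+* B) : IsDeltaReversible A ↔ IsDeltaReversible B := by
  constructor
  · intro h a b hab
    obtain ⟨a', rfl⟩ := e.surjective a
    obtain ⟨b', rfl⟩ := e.surjective b
    have : a' * b' = 0 := by
      apply e.injective
      rw [map_mul, hab, map_zero]
    have := h _ _ this
    rw [← map_mul]
    exact (zhou_congr e _).mp this
  · intro h a b hab
    have : e a * e b = 0 := by rw [← map_mul, hab, map_zero]
    have := h _ _ this
    rw [← map_mul] at this
    exact (zhou_congr e _).mpr this

end Transfer

section ProdCoatom
variable {α β : Type*} [PartialOrder α] [OrderTop α] [PartialOrder β] [OrderTop β]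

lemma prod_isCoatom_iff (a : α) (b : β) :
    IsCoatom (a, b) ↔ (IsCoatom a ∧ b = ⊤) ∨ (a = ⊤ ∧ IsCoatom b) := by
  constructor
  · rintro ⟨hne, hmax⟩
    by_cases ha : a = ⊤
    · right
      refine ⟨ha, ?_, ?_⟩
      · intro hb
        exact hne (Prod.ext ha hb)
      · intro c hc
        have := hmax (a, c) (by
          rw [Prod.lt_iff]
          right
          exact ⟨le_refl a, hc⟩)
        exact (Prod.ext_iff.mp this).2
    · left
      have hb : b = ⊤ := by
        by_contra hb
        have := hmax (a, ⊤) (by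
          rw [Prod.lt_iff]
          right
          exact ⟨le_refl a, lt_top_iff_ne_top.mpr hb⟩)
        exact ha (Prod.ext_iff.mp this).1
      refine ⟨⟨ha, ?_⟩, hb⟩
      intro c hc
      have := hmax (c, b) (by
        rw [Prod.lt_iff]
        left
        exact ⟨hc, le_refl b⟩)
      exact (Prod.ext_iff.mp this).1
  · rintro (⟨⟨hne, hmax⟩, rfl⟩ | ⟨rfl, hne, hmax⟩)
    · constructor
      · intro h
        exact hne (Prod.ext_iff.mp h).1
      · rintro ⟨c, d⟩ hcd
        rw [Prod.lt_iff] at hcd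
        have hc : c = ⊤ := by
          rcases hcd with ⟨h1, _⟩ | ⟨_, h2⟩
          · exact hmax _ h1
          · exact (not_top_lt h2).elim
        have hd : d = ⊤ := by
          rcases hcd with ⟨_, h2⟩ | ⟨_, h2⟩
          · exact le_antisymm le_top h2
          · exact (not_top_lt h2).elim
        exact Prod.ext hc hd
    · constructor
      · intro h
        exact hne (Prod.ext_iff.mp h).2
      · rintro ⟨c, d⟩ hcd
        rw [Prod.lt_iff] at hcd
        have hd : d = ⊤ := by
          rcases hcd with ⟨h1, _⟩ | ⟨_, h2⟩
          · exact (not_top_lt h1).elim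
          · exact hmax _ h2
        have hc : c = ⊤ := by
          rcases hcd with ⟨h1, _⟩ | ⟨h1, _⟩
          · exact (not_top_lt h1).elim
          · exact le_antisymm le_top h1
        exact Prod.ext hc hd

end ProdCoatom

section Prod
variable {A B : Type*} [Ring A] [Ring B]

def prodFst (K : Submodule (A × B)ᵐᵒᵖ (A × B)) : Submodule Aᵐᵒᵖ A where
  carrier := {a | ((a, 0) : A × B) ∈ K}
  zero_mem' := by exact K.zero_mem
  add_mem' := fun {x y} hx hy => by
    have := K.add_mem hx hy
    simpa using this
  smul_mem' := fun c x hx => by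
    have := K.smul_mem (op ((unop c, 1) : A × B)) hx
    rw [smul_eq_mul_unop, unop_op] at this
    simp only [Set.mem_setOf_eq] at *
    rw [smul_eq_mul_unop]
    simpa [Prod.mk_mul_mk] using this

def prodSnd (K : Submodule (A × B)ᵐᵒᵖ (A × B)) : Submodule Bᵐᵒᵖ B where
  carrier := {b | ((0, b) : A × B) ∈ K}
  zero_mem' := by exact K.zero_mem
  add_mem' := fun {x y} hx hy => by
    have := K.add_mem hx hy
    simpa using this
  smul_mem' := fun c x hx => by
    have := K.smul_mem (op ((1, unop c) : A × B)) hx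
    rw [smul_eq_mul_unop, unop_op] at this
    simp only [Set.mem_setOf_eq] at *
    rw [smul_eq_mul_unop]
    simpa [Prod.mk_mul_mk] using this

lemma mem_prod_iff (K : Submodule (A × B)ᵐᵒᵖ (A × B)) (x : A × B) :
    x ∈ K ↔ x.1 ∈ prodFst K ∧ x.2 ∈ prodSnd K := by
  constructor
  · intro hx
    constructor
    · have := K.smul_mem (op ((1, 0) : A × B)) hx
      rw [smul_eq_mul_unop, unop_op, Prod.mul_def] at this
      show ((x.1, 0) : A × B) ∈ K
      simpa using this
    · have := K.smul_mem (op ((0, 1) : A × B)) hx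
      rw [smul_eq_mul_unop, unop_op, Prod.mul_def] at this
      show ((0, x.2) : A × B) ∈ K
      simpa using this
  · rintro ⟨h1, h2⟩
    have := K.add_mem h1 h2
    simpa using this

def prodRIdeal (I : Submodule Aᵐᵒᵖ A) (J : Submodule Bᵐᵒᵖ B) :
    Submodule (A × B)ᵐᵒᵖ (A × B) where
  carrier := {x | x.1 ∈ I ∧ x.2 ∈ J}
  zero_mem' := ⟨I.zero_mem, J.zero_mem⟩
  add_mem' := fun {x y} hx hy => ⟨I.add_mem hx.1 hy.1, J.add_mem hx.2 hy.2⟩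
  smul_mem' := fun c x hx => by
    simp only [Set.mem_setOf_eq, smul_eq_mul_unop] at *
    constructor
    · have := I.smul_mem (op (unop c).1) hx.1
      rwa [smul_eq_mul_unop, unop_op] at this
    · have := J.smul_mem (op (unop c).2) hx.2
      rwa [smul_eq_mul_unop, unop_op] at this

@[simp] lemma mem_prodRIdeal (I : Submodule Aᵐᵒᵖ A) (J : Submodule Bᵐᵒᵖ B) (x : A × B) :
    x ∈ prodRIdeal I J ↔ x.1 ∈ I ∧ x.2 ∈ J := Iff.rfl

def prodRIdealIso :
    Submodule (A × B)ᵐᵒᵖ (A × B) ≃o Submodule Aᵐᵒᵖ A × Submodule Bᵐᵒᵖ B where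
  toFun K := (prodFst K, prodSnd K)
  invFun p := prodRIdeal p.1 p.2
  left_inv K := by
    ext x
    rw [mem_prodRIdeal, ← mem_prod_iff]
  right_inv p := by
    refine Prod.ext ?_ ?_
    · ext a
      show ((a, 0) : A × B) ∈ prodRIdeal p.1 p.2 ↔ a ∈ p.1
      simp
    · ext b
      show ((0, b) : A × B) ∈ prodRIdeal p.1 p.2 ↔ b ∈ p.2
      simp
  map_rel_iff' := by
    intro K K'
    constructor
    · intro h x hx
      rw [mem_prod_iff] at hx ⊢
      exact ⟨h.1 hx.1, h.2 hx.2⟩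
    · intro h
      constructor
      · intro a ha
        exact h ha
      · intro b hb
        exact h hb

lemma prod_ess_iff (I : Submodule Aᵐᵒᵖ A) (J : Submodule Bᵐᵒᵖ B) :
    (∀ k : Submodule Aᵐᵒᵖ A × Submodule Bᵐᵒᵖ B, k ⊓ (I, J) = ⊥ → k = ⊥) ↔
      IsEssentialRightIdeal A I ∧ IsEssentialRightIdeal B J := by
  constructor
  · intro h
    constructor
    · intro K hK
      have := h (K, ⊥) (by
        rw [Prod.ext_iff]
        exact ⟨hK, show (⊥ ⊓ J : Submodule Bᵐᵒᵖ B) = ⊥ by simp⟩)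
      exact (Prod.ext_iff.mp this).1
    · intro K hK
      have := h (⊥, K) (by
        rw [Prod.ext_iff]
        exact ⟨show (⊥ ⊓ I : Submodule Aᵐᵒᵖ A) = ⊥ by simp, hK⟩)
      exact (Prod.ext_iff.mp this).2
  · rintro ⟨h1, h2⟩ ⟨K, L⟩ hKL
    rw [Prod.ext_iff] at hKL
    exact Prod.ext (h1 _ hKL.1) (h2 _ hKL.2)

lemma mem_zhou_prod (x : A × B) :
    x ∈ zhouRadical (A × B) ↔ x.1 ∈ zhouRadical A ∧ x.2 ∈ zhouRadical B := by
  rw [mem_zhouRadical_iff, mem_zhouRadical_iff, mem_zhouRadical_iff]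
  constructor
  · intro h
    constructor
    · intro M hc he
      have hK : prodRIdealIso.symm ((M, ⊤) : Submodule Aᵐᵒᵖ A × Submodule Bᵐᵒᵖ B) = prodRIdeal M ⊤ := rfl
      have hc' : IsCoatom (prodRIdealIso.symm ((M, ⊤) : Submodule Aᵐᵒᵖ A × Submodule Bᵐᵒᵖ B)) :=
        (prodRIdealIso.symm.isCoatom_iff _).mpr
          ((prod_isCoatom_iff M ⊤).mpr (Or.inl ⟨hc, rfl⟩))
      have he' : IsEssentialRightIdeal (A × B) (prodRIdealIso.symm (M, ⊤)) := by
        have : ∀ k : Submodule Aᵐᵒᵖ A × Submodule Bᵐᵒᵖ B, k ⊓ (M, ⊤) = ⊥ → k = ⊥ :=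
          (prod_ess_iff M ⊤).mpr ⟨he, fun K hK => by simpa using hK⟩
        exact (ess_congr prodRIdealIso.symm _).mp this
      have := h _ hc' he'
      rw [hK, mem_prodRIdeal] at this
      exact this.1
    · intro N hc he
      have hK : prodRIdealIso.symm ((⊤, N) : Submodule Aᵐᵒᵖ A × Submodule Bᵐᵒᵖ B) = prodRIdeal ⊤ N := rfl
      have hc' : IsCoatom (prodRIdealIso.symm ((⊤, N) : Submodule Aᵐᵒᵖ A × Submodule Bᵐᵒᵖ B)) :=
        (prodRIdealIso.symm.isCoatom_iff _).mpr
          ((prod_isCoatom_iff ⊤ N).mpr (Or.inr ⟨rfl, hc⟩))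
      have he' : IsEssentialRightIdeal (A × B) (prodRIdealIso.symm (⊤, N)) := by
        have : ∀ k : Submodule Aᵐᵒᵖ A × Submodule Bᵐᵒᵖ B, k ⊓ (⊤, N) = ⊥ → k = ⊥ :=
          (prod_ess_iff ⊤ N).mpr ⟨fun K hK => by simpa using hK, he⟩
        exact (ess_congr prodRIdealIso.symm _).mp this
      have := h _ hc' he'
      rw [hK, mem_prodRIdeal] at this
      exact this.2
  · rintro ⟨h1, h2⟩ K hc he
    have hc' : IsCoatom (prodRIdealIso K) := (prodRIdealIso.isCoatom_iff K).mpr hc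
    have he' : ∀ k : Submodule Aᵐᵒᵖ A × Submodule Bᵐᵒᵖ B, k ⊓ prodRIdealIso K = ⊥ → k = ⊥ :=
      (ess_congr prodRIdealIso K).mp he
    have hKval : prodRIdealIso K = (prodFst K, prodSnd K) := rfl
    rw [hKval] at hc' he'
    have hess := (prod_ess_iff _ _).mp he'
    rw [mem_prod_iff]
    rcases (prod_isCoatom_iff _ _).mp hc' with ⟨hcf, hts⟩ | ⟨htf, hcs⟩
    · exact ⟨h1 _ hcf hess.1, by rw [hts]; trivial⟩
    · exact ⟨by rw [htf]; trivial, h2 _ hcs hess.2⟩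

lemma deltaRev_prod :
    IsDeltaReversible (A × B) ↔ IsDeltaReversible A ∧ IsDeltaReversible B := by
  constructor
  · intro h
    constructor
    · intro a b hab
      have := h (a, 0) (b, 0) (by simp [Prod.ext_iff, hab])
      rw [mem_zhou_prod] at this
      simpa using this.1
    · intro a b hab
      have := h (0, a) (0, b) (by simp [Prod.ext_iff, hab])
      rw [mem_zhou_prod] at this
      simpa using this.2
  · rintro ⟨h1, h2⟩ a b hab
    rw [Prod.ext_iff] at hab
    rw [mem_zhou_prod]
    exact ⟨h1 _ _ hab.1, h2 _ _ hab.2⟩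

end Prod

/-- The ring `H_{(s,t)}(R)`: the subring of `M₃(R)` consisting of all matrices
`[[a,0,0],[c,d,e],[0,0,f]]` with `a - d = s * c` and `d - f = t * e`,
where `s` and `t` are central elements of `R`. -/
def HstRing (R : Type*) [Ring R] (s t : R)
    (hs : ∀ r : R, s * r = r * s) (ht : ∀ r : R, t * r = r * t) :
    Subring (Matrix (Fin 3) (Fin 3) R) where
  carrier := {A | A 0 1 = 0 ∧ A 0 2 = 0 ∧ A 2 0 = 0 ∧ A 2 1 = 0 ∧
    A 0 0 - A 1 1 = s * A 1 0 ∧ A 1 1 - A 2 2 = t * A 1 2}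
  zero_mem' := by simp
  one_mem' := by
    refine ⟨?_, ?_, ?_, ?_, ?_, ?_⟩ <;>
      simp [Matrix.one_apply]
  add_mem' := by
    rintro A B ⟨hA01, hA02, hA20, hA21, hAs, hAt⟩ ⟨hB01, hB02, hB20, hB21, hBs, hBt⟩
    refine ⟨?_, ?_, ?_, ?_, ?_, ?_⟩
    · simp [Matrix.add_apply, hA01, hB01]
    · simp [Matrix.add_apply, hA02, hB02]
    · simp [Matrix.add_apply, hA20, hB20]
    · simp [Matrix.add_apply, hA21, hB21]
    · simp only [Matrix.add_apply]
      rw [mul_add, ← hAs, ← hBs]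
      abel
    · simp only [Matrix.add_apply]
      rw [mul_add, ← hAt, ← hBt]
      abel
  neg_mem' := by
    rintro A ⟨hA01, hA02, hA20, hA21, hAs, hAt⟩
    refine ⟨?_, ?_, ?_, ?_, ?_, ?_⟩
    · simp [Matrix.neg_apply, hA01]
    · simp [Matrix.neg_apply, hA02]
    · simp [Matrix.neg_apply, hA20]
    · simp [Matrix.neg_apply, hA21]
    · simp only [Matrix.neg_apply]
      rw [mul_neg, ← hAs]
      abel
    · simp only [Matrix.neg_apply]
      rw [mul_neg, ← hAt]
      abel
  mul_mem' := by
    rintro A B ⟨hA01, hA02, hA20, hA21, hAs, hAt⟩ ⟨hB01, hB02, hB20, hB21, hBs, hBt⟩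
    refine ⟨?_, ?_, ?_, ?_, ?_, ?_⟩
    · simp [Matrix.mul_apply, Fin.sum_univ_three, hA01, hA02, hB01]
    · simp [Matrix.mul_apply, Fin.sum_univ_three, hA01, hA02, hB02]
    · simp [Matrix.mul_apply, Fin.sum_univ_three, hA20, hA21, hB20]
    · simp [Matrix.mul_apply, Fin.sum_univ_three, hA20, hA21, hB21]
    · simp only [Matrix.mul_apply, Fin.sum_univ_three, hA01, hA02, hB01, hB20, hB21,
        zero_mul, mul_zero, add_zero, zero_add]
      rw [mul_add, ← mul_assoc, ← mul_assoc, ← hAs, hs (A 1 1),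
        mul_assoc (A 1 1) s (B 1 0), ← hBs]
      noncomm_ring
    · simp only [Matrix.mul_apply, Fin.sum_univ_three, hA20, hA21, hB01, hB02, hB21,
        zero_mul, mul_zero, add_zero, zero_add]
      rw [mul_add, ← mul_assoc, ← mul_assoc, ht (A 1 1),
        mul_assoc (A 1 1) t (B 1 2), ← hBt, ← hAt]
      noncomm_ring

section Hst
variable {R : Type*} [Ring R] (s t : R)
    (hs : ∀ r : R, s * r = r * s) (ht : ∀ r : R, t * r = r * t)
    (hsu : IsUnit s) (htu : IsUnit t)

set_option maxHeartbeats 1000000 in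
noncomputable def hstEquiv : HstRing R s t hs ht ≃+* R × R × R where
  toFun A := (A.1 0 0, A.1 1 1, A.1 2 2)
  invFun x := ⟨Matrix.of ![![x.1, 0, 0],
      ![↑hsu.unit⁻¹ * (x.1 - x.2.1), x.2.1, ↑htu.unit⁻¹ * (x.2.1 - x.2.2)],
      ![0, 0, x.2.2]], by
    refine ⟨by simp, by simp, by simp, by simp, ?_, ?_⟩
    · show x.1 - x.2.1 = s * (↑hsu.unit⁻¹ * (x.1 - x.2.1))
      rw [← mul_assoc, IsUnit.mul_val_inv, one_mul]
    · show x.2.1 - x.2.2 = t * (↑htu.unit⁻¹ * (x.2.1 - x.2.2))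
      rw [← mul_assoc, IsUnit.mul_val_inv, one_mul]⟩
  left_inv A := by
    obtain ⟨h01, h02, h20, h21, hc5, hc6⟩ := A.2
    apply Subtype.ext
    ext i j
    fin_cases i <;> fin_cases j <;>
      simp only [Matrix.of_apply, Matrix.cons_val_zero, Matrix.cons_val_one,
        Matrix.head_cons, Matrix.cons_val_two, Matrix.tail_cons, Matrix.head_fin_const,
        Fin.isValue]
    · rfl
    · exact h01.symm
    · exact h02.symm
    · show ↑hsu.unit⁻¹ * (A.1 0 0 - A.1 1 1) = A.1 1 0
      rw [hc5, ← mul_assoc, IsUnit.val_inv_mul, one_mul]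
    · rfl
    · show ↑htu.unit⁻¹ * (A.1 1 1 - A.1 2 2) = A.1 1 2
      rw [hc6, ← mul_assoc, IsUnit.val_inv_mul, one_mul]
    · exact h20.symm
    · exact h21.symm
    · rfl
  right_inv x := by
    refine Prod.ext ?_ (Prod.ext ?_ ?_) <;> simp
  map_mul' A B := by
    obtain ⟨hA01, hA02, hA20, hA21, -, -⟩ := A.2
    obtain ⟨hB01, hB02, hB20, hB21, -, -⟩ := B.2
    have hval : ((A * B : HstRing R s t hs ht) : Matrix (Fin 3) (Fin 3) R) = A.1 * B.1 := rfl
    refine Prod.ext ?_ (Prod.ext ?_ ?_) <;>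
      simp only [hval, Matrix.mul_apply, Fin.sum_univ_three, hA01, hA02, hA20, hA21,
        hB01, hB02, hB20, hB21, zero_mul, mul_zero, add_zero, zero_add, Prod.mk_mul_mk]
  map_add' A B := by
    have hval : ((A + B : HstRing R s t hs ht) : Matrix (Fin 3) (Fin 3) R) = A.1 + B.1 := rfl
    refine Prod.ext ?_ (Prod.ext ?_ ?_) <;> simp [hval, Matrix.add_apply]

end Hst

/-- `R` is δ-reversible iff `H_{(s,t)}(R)` is δ-reversible, for central units `s, t`. -/
theorem deltaReversible_iff_Hst (R : Type*) [Ring R] (s t : R)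
    (hs : ∀ r : R, s * r = r * s) (ht : ∀ r : R, t * r = r * t)
    (hsu : IsUnit s) (htu : IsUnit t) :
    IsDeltaReversible R ↔ IsDeltaReversible (HstRing R s t hs ht) := by
  rw [deltaRev_congr (hstEquiv s t hs ht hsu htu), deltaRev_prod, deltaRev_prod]
  tauto
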